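/- arXiv:1305.6263 — 3 statements merged into one kernel-verified Lean document; each statement's English description precedes it below -/
import Mathlib

section
/- Let G be a finite group in which any two self-normalizing nilpotent subgroups are conjugate, let A ≤ G be a self-normalizing nilpotent subgroup, and let K be a normal subgroup of G. Then AK is self-normalizing in G, i.e., N_G(AK) = AK. -/
/-- `C` is a Carter subgroup of the subgroup `H` of `G`:
a self-normalizing (within `H`) nilpotent subgroup of `H`. -/
def IsCarterIn {G : Type*} [Group G] (H C : Subgroup G) : Prop :=
  C ≤ H ∧ Group.IsNilpotent C ∧ Subgroup.normalizer (C : Set G) ⊓ H = C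

lemma map_conj_eq_iff_mem_normalizer {G : Type*} [Group G] (H : Subgroup G) (g : G) :
    H.map (MulAut.conj g).toMonoidHom = H ↔ g ∈ Subgroup.normalizer (H : Set G) := by
  rw [Subgroup.mem_normalizer_iff]
  constructor
  · intro h n
    have key : ∀ m, m ∈ H ↔ g⁻¹ * m * g ∈ H := fun m => by
      conv_lhs => rw [← h]
      rw [Subgroup.mem_map_equiv, MulAut.conj_symm_apply]
    rw [key (g * n * g⁻¹)]
    have hmn : g⁻¹ * (g * n * g⁻¹) * g = n := by group
    rw [hmn]
  · intro h
    ext x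
    rw [Subgroup.mem_map_equiv, MulAut.conj_symm_apply, h (g⁻¹ * x * g)]
    have hmx : g * (g⁻¹ * x * g) * g⁻¹ = x := by group
    rw [hmx]

/-- If `A` is a Carter subgroup of the finite group `G`, `K ⊴ G`, and any two
Carter subgroups of `AK` are conjugate in `AK`, then `AK` is self-normalizing. -/
theorem normalizer_join_eq_self
    (G : Type*) [Group G] [Finite G] (A K : Subgroup G)
    (hAnilp : Group.IsNilpotent A) (hself : Subgroup.normalizer (A : Set G) = A)
    (hK : K.Normal)
    (hVdovin : ∀ C₁ C₂ : Subgroup G, IsCarterIn (A ⊔ K) C₁ →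
      IsCarterIn (A ⊔ K) C₂ →
      ∃ g ∈ A ⊔ K, C₁.map (MulAut.conj g).toMonoidHom = C₂) :
    Subgroup.normalizer ((A ⊔ K : Subgroup G) : Set G) = A ⊔ K := by
  refine le_antisymm ?_ Subgroup.le_normalizer
  intro g hg
  have hA_le : A ≤ A ⊔ K := le_sup_left
  have hAcarter : IsCarterIn (A ⊔ K) A :=
    ⟨hA_le, hAnilp, by rw [hself]; exact inf_eq_left.mpr hA_le⟩
  have hmapAK : (A ⊔ K).map (MulAut.conj g).toMonoidHom = A ⊔ K :=
    (map_conj_eq_iff_mem_normalizer _ g).mpr hg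
  have hBcarter : IsCarterIn (A ⊔ K) (A.map (MulAut.conj g).toMonoidHom) := by
    refine ⟨?_, ?_, ?_⟩
    · rw [← hmapAK]; exact Subgroup.map_mono hA_le
    · exact nilpotent_of_mulEquiv ((MulAut.conj g).subgroupMap A)
    · rw [← Subgroup.map_equiv_normalizer_eq A (MulAut.conj g), hself]
      refine inf_eq_left.mpr ?_
      rw [← hmapAK]; exact Subgroup.map_mono hA_le
  obtain ⟨x, hx, hmap⟩ := hVdovin _ _ hBcarter hAcarter
  have hcomp : (MulAut.conj x).toMonoidHom.comp (MulAut.conj g).toMonoidHom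
      = (MulAut.conj (x * g)).toMonoidHom := by
    ext y; simp [mul_assoc]
  rw [Subgroup.map_map, hcomp] at hmap
  have hxg : x * g ∈ A :=
    hself ▸ (map_conj_eq_iff_mem_normalizer A (x * g)).mp hmap
  have : g = x⁻¹ * (x * g) := by group
  rw [this]
  exact mul_mem (inv_mem hx) (hA_le hxg)
end

section
/- Let G be a finite group, A an abelian self-normalizing subgroup of G, and assume any two Carter subgroups of any subgroup of G are conjugate. Then for every subgroup A₀ ≤ A, the normalizer N_G(A₀) equals the centralizer C_G(A₀). -/
private lemma conj_comp_conj {G : Type*} [Group G] (c g : G) :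
    (MulAut.conj c).toMonoidHom.comp (MulAut.conj g).toMonoidHom
      = (MulAut.conj (c * g)).toMonoidHom := by
  ext x
  simp [mul_assoc]

private lemma mem_normalizer_of_map_conj_eq {G : Type*} [Group G] {A : Subgroup G} {x : G}
    (h : A.map (MulAut.conj x).toMonoidHom = A) : x ∈ Subgroup.normalizer (A : Set G) := by
  rw [Subgroup.mem_normalizer_iff]
  intro a
  constructor
  · intro ha
    rw [← h]
    exact ⟨a, ha, rfl⟩
  · intro ha
    rw [← h] at ha
    rcases ha with ⟨b, hb, hba⟩
    simp only [MulEquiv.coe_toMonoidHom, MulAut.conj_apply] at hba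
    rwa [← mul_left_cancel (mul_right_cancel hba)]

/-- If `A` is an abelian self-normalizing subgroup of a finite group `G` in which
any two Carter subgroups of any subgroup are conjugate, then for every subgroup
`A₀` of `A` the normalizer of `A₀` equals its centralizer. -/
theorem normalizer_eq_centralizer_of_subgroup_of_carter
    (G : Type*) [Group G] [Finite G] (A : Subgroup G)
    (hA : IsMulCommutative A) (hself : Subgroup.normalizer (A : Set G) = A)
    (hVdovin : ∀ H C₁ C₂ : Subgroup G, IsCarterIn H C₁ → IsCarterIn H C₂ →
      ∃ g ∈ H, C₁.map (MulAut.conj g).toMonoidHom = C₂)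
    (A₀ : Subgroup G) (hA₀ : A₀ ≤ A) :
    Subgroup.normalizer (A₀ : Set G) = Subgroup.centralizer (A₀ : Set G) := by
  haveI := hA
  set C := Subgroup.centralizer (A₀ : Set G) with hCdef
  -- the centralizer is contained in the normalizer
  have hCN : C ≤ Subgroup.normalizer (A₀ : Set G) := by
    intro x hx
    rw [Subgroup.mem_normalizer_iff]
    intro h
    constructor
    · intro hh
      have hcomm := Subgroup.mem_centralizer_iff.mp hx h hh
      have : x * h * x⁻¹ = h := by rw [← hcomm]; group
      rwa [this]
    · intro hh
      have hcomm := Subgroup.mem_centralizer_iff.mp hx (x * h * x⁻¹) hh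
      have key : h = x * h * x⁻¹ := by
        calc h = x⁻¹ * ((x * h * x⁻¹) * x) := by group
          _ = x⁻¹ * (x * (x * h * x⁻¹)) := by rw [hcomm]
          _ = x * h * x⁻¹ := by group
      rwa [key]
  -- A is contained in the centralizer
  have hAC : A ≤ C := le_trans (Subgroup.le_centralizer A) (Subgroup.centralizer_le hA₀)
  -- A is a Carter subgroup of C
  have hCarterA : IsCarterIn C A :=
    ⟨hAC, @CommGroup.isNilpotent _ { (inferInstance : Group A) with mul_comm := mul_comm' }, by rw [hself]; exact inf_of_le_left hAC⟩
  -- Now take g in the normalizer and show it centralizes A₀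
  refine le_antisymm (fun g hg => ?_) hCN
  set B := A.map (MulAut.conj g).toMonoidHom with hBdef
  have hBC : B ≤ C := by
    rintro _ ⟨a, ha, rfl⟩
    simp only [MulEquiv.coe_toMonoidHom, MulAut.conj_apply]
    rw [hCdef, Subgroup.mem_centralizer_iff]
    intro h hh
    have hg' : g⁻¹ * h * g ∈ A₀ := by
      have := ((Subgroup.mem_normalizer_iff.mp ((Subgroup.normalizer (A₀ : Set G)).inv_mem hg)) h).mp hh
      simpa [mul_assoc] using this
    have hcomm := Subgroup.mem_centralizer_iff.mp (hAC ha) (g⁻¹ * h * g) hg'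
    calc h * (g * a * g⁻¹) = g * ((g⁻¹ * h * g) * a) * g⁻¹ := by group
      _ = g * (a * (g⁻¹ * h * g)) * g⁻¹ := by rw [hcomm]
      _ = g * a * g⁻¹ * h := by group
  have hBnorm : Subgroup.normalizer (B : Set G) = B := by
    rw [hBdef, ← Subgroup.map_equiv_normalizer_eq A (MulAut.conj g), hself]
  have hCarterB : IsCarterIn C B := by
    refine ⟨hBC, @CommGroup.isNilpotent _ { (inferInstance : Group B) with mul_comm := mul_comm' }, by rw [hBnorm]; exact inf_of_le_left hBC⟩
  obtain ⟨c, hc, hmap⟩ := hVdovin C B A hCarterB hCarterA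
  rw [hBdef, Subgroup.map_map, conj_comp_conj] at hmap
  have hcg : c * g ∈ C := hAC (hself ▸ mem_normalizer_of_map_conj_eq hmap)
  have : g = c⁻¹ * (c * g) := by group
  rw [this]
  exact C.mul_mem (C.inv_mem hc) hcg
end

section
/- Let A be a finite abelian group acting regularly on itself by right translation inside Sym(A), and let H ≤ Sym(A) contain A with A self-normalizing in H. If V ≤ Sym(A) is an abelian regular normal subgroup of H with A ≠ V, then there exists v ∈ V normalizing A but not centralizing A, i.e., N_V(A) \ C_V(A) is nonempty — equivalently, if C_H(A) = A and AV > A then N_V(A) ⊄ C_H(A). -/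
lemma aux_ring {V : Type*} [CommGroup V] [Finite V] (m : V → V → V)
    (h2 : ∀ u x y, m u (x * y) = m u x * m u y)
    (hcomm : ∀ u x, m u x = m x u)
    (hassoc : ∀ u w x, m (m u w) x = m u (m w x))
    (hqr : ∀ u, ∃ u', u * u' * m u u' = 1)
    (hne : ∃ u x, m u x ≠ 1) :
    ∃ v, (∀ u x, m (m u v) x = 1) ∧ ∃ u, m u v ≠ 1 := by
  classical
  -- basic ring facts
  have hm1 : ∀ u, m u 1 = 1 := by
    intro u
    have h := h2 u 1 1
    rw [one_mul] at h
    exact (mul_eq_left.mp h.symm)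
  have hm1' : ∀ x, m 1 x = 1 := fun x => by rw [hcomm]; exact hm1 x
  have h1 : ∀ u w x, m (u * w) x = m u x * m w x := by
    intro u w x
    rw [hcomm, h2, hcomm x u, hcomm x w]
  have hinv2 : ∀ u x, m u x⁻¹ = (m u x)⁻¹ := by
    intro u x
    have h := h2 u x⁻¹ x
    rw [inv_mul_cancel, hm1] at h
    exact eq_inv_of_mul_eq_one_left h.symm
  have hinv1 : ∀ u x, m u⁻¹ x = (m u x)⁻¹ := by
    intro u x
    rw [hcomm, hinv2, hcomm]
  -- powers
  set p : V → ℕ → V := fun u n => Nat.rec u (fun _ ih => m u ih) n with hp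
  have ps : ∀ u n, p u (n + 1) = m u (p u n) := fun u n => rfl
  have padd : ∀ u j k, m (p u j) (p u k) = p u (j + k + 1) := by
    intro u j
    induction j with
    | zero => intro k; rw [Nat.zero_add]; exact (ps u k).symm
    | succ j ih =>
      intro k
      rw [ps, hassoc, ih, show j + 1 + k + 1 = (j + k + 1) + 1 by omega, ps]
  -- every element is nilpotent
  have nilp : ∀ u, ∃ N, p u N = 1 := by
    intro u
    obtain ⟨i, j, hij, hpij⟩ := Finite.exists_ne_map_eq_of_infinite (p u)
    wlog hlt : i < j generalizing i j
    · exact this j i hij.symm hpij.symm (by omega)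
    set d : ℕ := j - i with hd
    have hd1 : 1 ≤ d := by omega
    have pstep : ∀ k, p u (i + k) = p u (j + k) := by
      intro k
      induction k with
      | zero => simpa using hpij
      | succ k ih =>
        have : p u (i + k + 1) = p u (j + k + 1) := by rw [ps, ps, ih]
        simpa [Nat.add_assoc] using this
    have per : ∀ s, i ≤ s → p u (s + d) = p u s := by
      intro s hs
      have h := pstep (s - i)
      rw [show i + (s - i) = s by omega, show j + (s - i) = s + d by omega] at h
      exact h.symm
    have perk : ∀ k s, i ≤ s → p u (s + k * d) = p u s := by
      intro k
      induction k with
      | zero => intro s hs; simp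
      | succ k ih =>
        intro s hs
        have h1' : p u (s + k * d + d) = p u (s + k * d) := per _ (by omega)
        have h2' := ih s hs
        rw [show s + (k+1) * d = s + k * d + d by ring, h1', h2']
    set N : ℕ := d * (i + 1) - 1 with hN
    have hdi : i + 1 ≤ d * (i + 1) := Nat.le_mul_of_pos_left _ (by omega)
    have hNi : i ≤ N := by omega
    have hN1 : N + N + 1 = N + (i + 1) * d := by rw [mul_comm]; omega
    set e : V := p u N with he
    have idem : m e e = e := by
      rw [padd, hN1, perk (i + 1) N hNi]
    have he1 : e = 1 := by
      obtain ⟨x, hx⟩ := hqr e⁻¹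
      have key : m e (e⁻¹ * x * m e⁻¹ x) = m e 1 := by rw [hx]
      rw [hm1, h2, h2, hinv2, idem, ← hassoc, hinv2, idem, hinv1] at key
      -- key : e⁻¹ * m e x * (m e x)⁻¹ = 1
      rw [mul_assoc, mul_inv_cancel, mul_one] at key
      exact inv_eq_one.mp key
    exact ⟨N, he1⟩
  -- main argument
  by_contra hcon
  push_neg at hcon
  have step : ∀ v : V, (∃ y, m v y ≠ 1) → ∃ u, ∃ y, m (m v u) y ≠ 1 := by
    intro v ⟨y, hy⟩
    by_contra h'
    push_neg at h'
    have hall : ∀ u x, m (m u v) x = 1 := by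
      intro u x
      rw [hcomm u v]
      exact h' u x
    exact hy (by rw [hcomm]; exact hcon v hall y)
  obtain ⟨u₀, x₀, h₀⟩ := hne
  set w : ℕ → {v : V // ∃ y, m v y ≠ 1} :=
    fun n => Nat.rec ⟨u₀, ⟨x₀, h₀⟩⟩
      (fun _ prev => ⟨m prev.1 (step prev.1 prev.2).choose, (step prev.1 prev.2).choose_spec⟩) n
    with hw
  have ws : ∀ n, ∃ c, (w (n + 1)).1 = m c (w n).1 := by
    intro n
    refine ⟨(step (w n).1 (w n).2).choose, ?_⟩
    rw [hcomm]
  have multl : ∀ n k, ∃ q, (w (n + k + 1)).1 = m q (w n).1 := by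
    intro n k
    induction k with
    | zero => simpa using ws n
    | succ k ih =>
      obtain ⟨q, hq⟩ := ih
      obtain ⟨c, hc⟩ := ws (n + k + 1)
      refine ⟨m c q, ?_⟩
      rw [show n + (k+1) + 1 = (n + k + 1) + 1 by omega, hc, hq, ← hassoc]
  obtain ⟨n, n', hnn, hww⟩ := Finite.exists_ne_map_eq_of_infinite w
  wlog hlt : n < n' generalizing n n'
  · exact this n' n hnn.symm hww.symm (by omega)
  obtain ⟨q, hq⟩ := multl n (n' - n - 1)
  rw [show n + (n' - n - 1) + 1 = n' by omega, ← hww] at hq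
  have iter : ∀ jj, (w n).1 = m (p q jj) (w n).1 := by
    intro jj
    induction jj with
    | zero => exact hq
    | succ jj ih =>
      calc (w n).1 = m q (w n).1 := hq
        _ = m q (m (p q jj) (w n).1) := by rw [← ih]
        _ = m (m q (p q jj)) (w n).1 := (hassoc _ _ _).symm
        _ = m (p q (jj + 1)) (w n).1 := by rw [← ps]
  obtain ⟨N, hN⟩ := nilp q
  have : (w n).1 = 1 := by
    have := iter N
    rwa [hN, hm1'] at this
  obtain ⟨y, hy⟩ := (w n).2
  rw [this, hm1'] at hy
  exact hy rfl

/-- Let `H` be a finite permutation group on `Δ` with two regular abelian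
subgroups `A` and `V`, where `V` is normal with `V = C_H(V)`, `C_H(A) = A` and
`A ≠ V`. Then there is an element of `V` normalizing `A` but not
centralizing `A`. -/
theorem exists_normalizing_not_centralizing
    (H : Type*) [Group H] [Finite H] (Δ : Type*) [Finite Δ]
    [MulAction H Δ] [FaithfulSMul H Δ] [MulAction.IsPretransitive H Δ]
    (A V : Subgroup H) (hA : IsMulCommutative A) (hV : IsMulCommutative V)
    (hAtrans : ∀ δ₁ δ₂ : Δ, ∃ a ∈ A, a • δ₁ = δ₂)
    (hAfree : ∀ a ∈ A, ∀ δ : Δ, a • δ = δ → a = 1)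
    (hVtrans : ∀ δ₁ δ₂ : Δ, ∃ v ∈ V, v • δ₁ = δ₂)
    (hVfree : ∀ v ∈ V, ∀ δ : Δ, v • δ = δ → v = 1)
    (hVnorm : V.Normal) (hVcent : Subgroup.centralizer (V : Set H) = V)
    (hAcent : Subgroup.centralizer (A : Set H) = A) (hAV : A ≠ V) :
    ∃ v ∈ V, v ∈ Subgroup.normalizer (A : Set H) ∧ v ∉ Subgroup.centralizer (A : Set H) := by
  classical
  letI : CommGroup ↥A := { (inferInstance : Group ↥A) with mul_comm := hA.is_comm.comm }
  letI : CommGroup ↥V := { (inferInstance : Group ↥V) with mul_comm := hV.is_comm.comm }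
  rcases isEmpty_or_nonempty Δ with hempty | hne
  · exfalso
    have hsub : ∀ g g' : H, g = g' := fun g g' =>
      eq_of_smul_eq_smul (M := H) (α := Δ) (fun δ => (hempty.elim δ))
    exact hAV (Subgroup.ext fun x => by rw [hsub x 1]; exact iff_of_true (one_mem A) (one_mem V))
  obtain ⟨δ₀⟩ := hne
  -- uniqueness of representatives
  have hVu : ∀ v w : ↥V, (v : H) • δ₀ = (w : H) • δ₀ → v = w := by
    intro v w h
    have hfix : ((w⁻¹ * v : ↥V) : H) • δ₀ = δ₀ := by
      push_cast
      rw [mul_smul, h, inv_smul_smul]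
    have h1 := hVfree _ (w⁻¹ * v).2 δ₀ hfix
    have h2 : (w⁻¹ * v : ↥V) = 1 := by exact_mod_cast h1
    exact (inv_mul_eq_one.mp h2).symm
  have hAu : ∀ a b : ↥A, (a : H) • δ₀ = (b : H) • δ₀ → a = b := by
    intro a b h
    have hfix : ((b⁻¹ * a : ↥A) : H) • δ₀ = δ₀ := by
      push_cast
      rw [mul_smul, h, inv_smul_smul]
    have h1 := hAfree _ (b⁻¹ * a).2 δ₀ hfix
    have h2 : (b⁻¹ * a : ↥A) = 1 := by exact_mod_cast h1
    exact (inv_mul_eq_one.mp h2).symm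
  choose ρV hρVmem hρV using fun δ => hVtrans δ₀ δ
  choose ρA hρAmem hρA using fun δ => hAtrans δ₀ δ
  set c : ↥A → ↥V := fun a => ⟨ρV ((a : H) • δ₀), hρVmem _⟩ with hcdef
  set α : ↥V → ↥A := fun v => ⟨ρA ((v : H) • δ₀), hρAmem _⟩ with hαdef
  have hc : ∀ a : ↥A, ((c a : ↥V) : H) • δ₀ = (a : H) • δ₀ := fun a => hρV _
  have hα : ∀ v : ↥V, ((α v : ↥A) : H) • δ₀ = (v : H) • δ₀ := fun v => hρA _
  have αc : ∀ a, α (c a) = a := fun a => hAu _ _ (by rw [hα, hc])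
  have cα : ∀ v, c (α v) = v := fun v => hVu _ _ (by rw [hc, hα])
  -- conjugation action of A on V
  set f : ↥A → ↥V → ↥V := fun a v => ⟨(a : H) * v * (a : H)⁻¹, hVnorm.conj_mem v.1 v.2 a⟩
    with hfdef
  have fval : ∀ (a : ↥A) (v : ↥V), ((f a v : ↥V) : H) = (a : H) * v * (a : H)⁻¹ :=
    fun a v => rfl
  have fmul : ∀ a v w, f a (v * w) = f a v * f a w := by
    intro a v w
    ext
    push_cast [fval]
    group
  have finv : ∀ a v, f a v⁻¹ = (f a v)⁻¹ := by
    intro a v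
    ext
    push_cast [fval]
    group
  have fcomp : ∀ a b v, f (a * b) v = f a (f b v) := by
    intro a b v
    ext
    push_cast [fval]
    group
  -- the affine action formula
  have haff : ∀ (a : ↥A) (v : ↥V),
      (a : H) • ((v : H) • δ₀) = ((f a v * c a : ↥V) : H) • δ₀ := by
    intro a v
    rw [smul_smul]
    have hrhs : ((f a v * c a : ↥V) : H) • δ₀ = ((f a v : ↥V) : H) • (((c a : ↥V) : H) • δ₀) := by
      push_cast
      rw [mul_smul]
    rw [hrhs, hc, smul_smul, fval]
    congr 1
    group
  have cmul : ∀ a b : ↥A, c (a * b) = f a (c b) * c a := by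
    intro a b
    apply hVu
    rw [hc]
    have h1 : ((a * b : ↥A) : H) • δ₀ = (a : H) • ((b : H) • δ₀) := by
      push_cast
      rw [mul_smul]
    rw [h1, ← hc b, haff]
  -- the ring multiplication
  set m : ↥V → ↥V → ↥V := fun u x => f (α u) x * x⁻¹ with hmdef
  have mval : ∀ u x : ↥V, m u x = f (α u) x * x⁻¹ := fun u x => rfl
  have mc : ∀ (a : ↥A) (x : ↥V), m (c a) x = f a x * x⁻¹ := by
    intro a x
    rw [mval, αc]
  have fα : ∀ u x : ↥V, f (α u) x = m u x * x := by
    intro u x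
    rw [mval]
    exact (inv_mul_cancel_right _ _).symm
  have fca : ∀ (a : ↥A) (x : ↥V), f a x = m (c a) x * x := by
    intro a x
    conv_lhs => rw [← αc a]
    rw [fα]
  -- hypotheses of aux_ring
  have h2 : ∀ u x y : ↥V, m u (x * y) = m u x * m u y := by
    intro u x y
    simp only [mval, fmul, mul_inv]
    generalize f (α u) x = P
    generalize f (α u) y = Q
    apply Additive.ofMul.injective
    simp only [ofMul_mul, ofMul_inv]
    abel
  have hcomm : ∀ u x : ↥V, m u x = m x u := by
    intro u x
    have E : f (α u) x * u = f (α x) u * x := by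
      have e1 := cmul (α u) (α x)
      have e2 := cmul (α x) (α u)
      rw [mul_comm (α u) (α x)] at e1
      rw [e1, cα, cα] at e2
      exact e2
    apply mul_right_cancel (b := u * x)
    calc m u x * (u * x) = f (α u) x * x⁻¹ * (u * x) := by rw [mval]
      _ = f (α u) x * u := by
          rw [mul_assoc, mul_comm u x, inv_mul_cancel_left]
      _ = f (α x) u * x := E
      _ = f (α x) u * u⁻¹ * (u * x) := by
          rw [mul_assoc, inv_mul_cancel_left]
      _ = m x u * (u * x) := by rw [mval]
  have madd1 : ∀ u w x : ↥V, m (u * w) x = m u x * m w x := by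
    intro u w x
    rw [hcomm, h2, hcomm x u, hcomm x w]
  have hm1 : ∀ u : ↥V, m u 1 = 1 := by
    intro u
    have h := h2 u 1 1
    rw [one_mul] at h
    exact mul_eq_left.mp h.symm
  have hm1' : ∀ x : ↥V, m 1 x = 1 := fun x => by rw [hcomm]; exact hm1 x
  have minv2 : ∀ u x : ↥V, m u x⁻¹ = (m u x)⁻¹ := by
    intro u x
    have h := h2 u x⁻¹ x
    rw [inv_mul_cancel, hm1] at h
    exact eq_inv_of_mul_eq_one_left h.symm
  have minv1 : ∀ u x : ↥V, m u⁻¹ x = (m u x)⁻¹ := by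
    intro u x
    rw [hcomm, minv2, hcomm]
  have h4 : ∀ (a b : ↥A) (x : ↥V),
      m (c (a * b)) x = m (c a) x * m (c b) x * m (c a) (m (c b) x) := by
    intro a b x
    simp only [mc]
    rw [fcomp]
    simp only [fmul, finv, mul_inv, inv_inv]
    generalize f a (f b x) = R
    generalize f a x = P
    generalize f b x = Q
    apply Additive.ofMul.injective
    simp only [ofMul_mul, ofMul_inv]
    abel
  have hassoc : ∀ u w x : ↥V, m (m u w) x = m u (m w x) := by
    intro u w x
    have h5 : c (α u * α w) = m u w * w * u := by
      rw [cmul, cα, cα, fα]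
    have h6 := h4 (α u) (α w) x
    rw [h5, cα, cα, madd1, madd1] at h6
    apply mul_right_cancel (b := m w x * m u x)
    calc m (m u w) x * (m w x * m u x) = m (m u w) x * m w x * m u x :=
          (mul_assoc (m (m u w) x) (m w x) (m u x)).symm
      _ = m u x * m w x * m u (m w x) := h6
      _ = m u (m w x) * (m w x * m u x) := by
          generalize m u (m w x) = P
          generalize m u x = Q
          generalize m w x = R
          apply Additive.ofMul.injective
          simp only [ofMul_mul, ofMul_inv]
          abel
  have hc1 : c 1 = 1 := by
    apply hVu
    rw [hc]
    simp
  have hqr : ∀ u : ↥V, ∃ u', u * u' * m u u' = 1 := by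
    intro u
    refine ⟨c (α u)⁻¹, ?_⟩
    have h8 := cmul (α u) (α u)⁻¹
    rw [mul_inv_cancel, hc1, cα, fα] at h8
    have hre : u * c (α u)⁻¹ * m u (c (α u)⁻¹) = m u (c (α u)⁻¹) * c (α u)⁻¹ * u := by
      apply Additive.ofMul.injective
      simp only [ofMul_mul, ofMul_inv]
      abel
    rw [hre]
    exact h8.symm
  have hne2 : ∃ u x : ↥V, m u x ≠ 1 := by
    by_contra hcc
    push_neg at hcc
    have hfid : ∀ (a : ↥A) (x : ↥V), f a x = x := by
      intro a x
      have h9 := hcc (c a) x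
      rw [fca, h9, one_mul]
    have hle1 : A ≤ V := by
      intro a ha
      rw [← hVcent, Subgroup.mem_centralizer_iff]
      intro h hh
      have h10 := congrArg (Subtype.val) (hfid ⟨a, ha⟩ ⟨h, hh⟩)
      rw [fval] at h10
      -- a * h * a⁻¹ = h
      calc h * a = (a * h * a⁻¹) * a := by rw [h10]
        _ = a * h := by group
    have hle2 : V ≤ A := by
      intro x hx
      have hmem := hle1 (α ⟨x, hx⟩).2
      have h11 : (⟨(α ⟨x, hx⟩ : H), hmem⟩ : ↥V) = ⟨x, hx⟩ := by
        apply hVu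
        exact hα ⟨x, hx⟩
      have h12 := congrArg (Subtype.val) h11
      simp only at h12
      rw [← h12]
      exact (α ⟨x, hx⟩).2
    exact hAV (le_antisymm hle1 hle2)
  -- apply the abstract lemma
  obtain ⟨v, hP, u, hu⟩ := aux_ring m h2 hcomm hassoc hqr hne2
  -- key conjugation lemma
  have KEY : ∀ v' : ↥V, (∀ u' x : ↥V, m (m u' v') x = 1) →
      ∀ a : ↥A, (v' : H) * a * (v' : H)⁻¹ ∈ A := by
    intro v' hP' a
    set a' : ↥A := α (c a * (m (c a) v')⁻¹) with ha'
    have hfa' : ∀ x : ↥V, f a' x = f a x := by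
      intro x
      rw [fca a' x, cα, madd1, minv1, hP' (c a) x, inv_one, mul_one, ← fca]
    have hca' : c a' = c a * (m (c a) v')⁻¹ := cα _
    have heq : (v' : H) * a * (v' : H)⁻¹ = (a' : H) := by
      apply eq_of_smul_eq_smul (M := H) (α := Δ)
      intro δ
      obtain ⟨x0, hx0mem, hx0⟩ := hVtrans δ₀ δ
      rw [← hx0]
      have hL : ((v' : H) * a * (v' : H)⁻¹) • ((⟨x0, hx0mem⟩ : ↥V) : H) • δ₀
          = ((v' * (f a (v'⁻¹ * ⟨x0, hx0mem⟩) * c a) : ↥V) : H) • δ₀ := by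
        rw [smul_smul]
        rw [show (v' : H) * a * (v' : H)⁻¹ * (⟨x0, hx0mem⟩ : ↥V)
            = (v' : H) * ((a : H) * ((v'⁻¹ * ⟨x0, hx0mem⟩ : ↥V) : H)) by push_cast; group]
        rw [mul_smul, mul_smul, haff, ← mul_smul]
        push_cast
        rw [mul_assoc]
      have hR : (a' : H) • ((⟨x0, hx0mem⟩ : ↥V) : H) • δ₀
          = ((f a' ⟨x0, hx0mem⟩ * c a' : ↥V) : H) • δ₀ := haff a' _
      rw [hL, hR]
      congr 2
      rw [hfa', hca']
      rw [fmul, finv, fca a v', fca a]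
      generalize hPP : m (c a) (⟨x0, hx0mem⟩ : ↥V) = P
      generalize m (c a) v' = Q
      generalize (c a : ↥V) = R
      generalize (⟨x0, hx0mem⟩ : ↥V) = X at hPP ⊢
      apply Additive.ofMul.injective
      simp only [ofMul_mul, ofMul_inv]
      abel
    rw [heq]
    exact a'.2
  have hPinv : ∀ u' x : ↥V, m (m u' v⁻¹) x = 1 := by
    intro u' x
    rw [minv2, minv1, hP u' x, inv_one]
  refine ⟨(v : H), v.2, ?_, ?_⟩
  · rw [Subgroup.mem_normalizer_iff]
    intro h
    constructor
    · intro hh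
      exact KEY v hP ⟨h, hh⟩
    · intro hh
      have h13 := KEY v⁻¹ hPinv ⟨(v : H) * h * (v : H)⁻¹, hh⟩
      have h14 : ((v⁻¹ : ↥V) : H) * ((v : H) * h * (v : H)⁻¹) * ((v⁻¹ : ↥V) : H)⁻¹ = h := by
        push_cast
        group
      rwa [h14] at h13
  · intro hmemc
    have hcm := Subgroup.mem_centralizer_iff.mp hmemc (α u : H) (α u).2
    -- hcm : ↑(α u) * ↑v = ↑v * ↑(α u)
    have h10 : ((α u : H) * (v : H)) • δ₀ = ((m u v * v * u : ↥V) : H) • δ₀ := by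
      rw [mul_smul, haff, fα, cα]
    have h11 : ((v : H) * (α u : H)) • δ₀ = ((v * u : ↥V) : H) • δ₀ := by
      rw [mul_smul, hα, ← mul_smul]
      push_cast
      rw [mul_smul]
    rw [hcm, h11] at h10
    have h15 := hVu _ _ h10.symm
    -- h15 : m u v * v * u = v * u
    have : m u v = 1 := by
      have h16 : m u v * (v * u) = 1 * (v * u) := by
        rw [one_mul, ← mul_assoc]
        exact h15
      exact mul_right_cancel h16
    exact hu this
end
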